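/- The minimum classical extension of IA₁ is IA₁ itself: the Gödel–Gentzen negative translations of all axioms of IA₁ are provable in IA₁, and the negative translations of its rules of inference are admissible for IA₁; hence (IA₁)^{+g} = IA₁. -/

import Mathlib

/-!
A deep embedding of the two-sorted language of intuitionistic analysis
(Kleene-Vesley), with number variables and one-place function (choice
sequence) variables, finitely many constants for primitive recursive
function(al)s (successor, +, ·, truncated subtraction ∸, pairing ⟨·,·⟩,
finite-sequence coding: concatenation *, singleton code ⟨s⟩, empty code ⟨⟩,
length lh, the Seq predicate, Kleene's T-predicate and U-function, and the
course-of-values functional ᾱ(x)), λ-abstraction with λ-reduction,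
intuitionistic two-sorted predicate logic, the Gödel–Gentzen negative
translation g, and the axiom schemas of the paper
"Calibrating the negative interpretation" (J.R. Moschovakis).
-/

namespace NegInterp

/-! Terms (type 0) and functors (type 1). -/
mutual
inductive Term : Type
  | var   : ℕ → Term
  | zero  : Term
  | succ  : Term → Term
  | add   : Term → Term → Term
  | mul   : Term → Term → Term
  | sub   : Term → Term → Term           -- truncated subtraction
  | pair  : Term → Term → Term           -- ⟨s,t⟩
  | cat   : Term → Term → Term           -- concatenation w ∗ v of sequence codes
  | sing  : Term → Term                  -- ⟨s⟩
  | empt  : Term                         -- ⟨ ⟩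
  | lh    : Term → Term                  -- length of a sequence code
  | seqc  : Term → Term                  -- characteristic function of Seq
  | kT    : Term → Term → Term → Term    -- characteristic function of Kleene's T
  | kU    : Term → Term                  -- Kleene's result-extraction U
  | app   : Func → Term → Term           -- φ(t)
  | bar   : Func → Term → Term           -- ᾱ(t), the code of (α(0),…,α(t−1))
inductive Func : Type
  | fvar : ℕ → Func
  | lam  : ℕ → Term → Func               -- λx.t
end

open Term Func

/-- Coding of finite sequences of naturals by naturals (every natural is a code). -/
def listCode (l : List ℕ) : ℕ := Encodable.encode l
def listDec (n : ℕ) : List ℕ := Denumerable.ofNat (List ℕ) n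

/-- Kleene's T-predicate: y codes a (fuel, value) pair witnessing that the
machine with code e halts on input x with the given value. -/
def KTmeta (e x y : ℕ) : Prop :=
  Nat.Partrec.Code.evaln y.unpair.1 (Denumerable.ofNat Nat.Partrec.Code e) x = some y.unpair.2

instance (e x y : ℕ) : Decidable (KTmeta e x y) := by unfold KTmeta; infer_instance

/-! Standard (full classical ω-model) interpretation of terms and functors,
used only to state the defining axioms of the primitive recursive constants. -/
mutual
def evalT (ρ : ℕ → ℕ) (σ : ℕ → ℕ → ℕ) : Term → ℕ
  | .var n => ρ n
  | .zero => 0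
  | .succ t => evalT ρ σ t + 1
  | .add s t => evalT ρ σ s + evalT ρ σ t
  | .mul s t => evalT ρ σ s * evalT ρ σ t
  | .sub s t => evalT ρ σ s - evalT ρ σ t
  | .pair s t => Nat.pair (evalT ρ σ s) (evalT ρ σ t)
  | .cat s t => listCode (listDec (evalT ρ σ s) ++ listDec (evalT ρ σ t))
  | .sing t => listCode [evalT ρ σ t]
  | .empt => listCode []
  | .lh t => (listDec (evalT ρ σ t)).length
  | .seqc _ => 0      -- under this coding every number codes a finite sequence
  | .kT e x y => if KTmeta (evalT ρ σ e) (evalT ρ σ x) (evalT ρ σ y) then 0 else 1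
  | .kU y => (Nat.unpair (evalT ρ σ y)).2
  | .app φ t => evalF ρ σ φ (evalT ρ σ t)
  | .bar φ t => listCode ((List.range (evalT ρ σ t)).map (evalF ρ σ φ))
def evalF (ρ : ℕ → ℕ) (σ : ℕ → ℕ → ℕ) : Func → ℕ → ℕ
  | .fvar n => σ n
  | .lam x t => fun m => evalT (Function.update ρ x m) σ t
end

/-! Free number variables of a term / functor. -/
mutual
def tFN : Term → Set ℕ
  | .var n => {n}
  | .zero => ∅
  | .empt => ∅
  | .succ t => tFN t
  | .sing t => tFN t
  | .lh t => tFN t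
  | .seqc t => tFN t
  | .kU t => tFN t
  | .add s t => tFN s ∪ tFN t
  | .mul s t => tFN s ∪ tFN t
  | .sub s t => tFN s ∪ tFN t
  | .pair s t => tFN s ∪ tFN t
  | .cat s t => tFN s ∪ tFN t
  | .kT e x y => tFN e ∪ tFN x ∪ tFN y
  | .app φ t => fFN φ ∪ tFN t
  | .bar φ t => fFN φ ∪ tFN t
def fFN : Func → Set ℕ
  | .fvar _ => ∅
  | .lam x t => tFN t \ {x}
end

/-! Free function variables of a term / functor. -/
mutual
def tFF : Term → Set ℕ
  | .var _ => ∅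
  | .zero => ∅
  | .empt => ∅
  | .succ t => tFF t
  | .sing t => tFF t
  | .lh t => tFF t
  | .seqc t => tFF t
  | .kU t => tFF t
  | .add s t => tFF s ∪ tFF t
  | .mul s t => tFF s ∪ tFF t
  | .sub s t => tFF s ∪ tFF t
  | .pair s t => tFF s ∪ tFF t
  | .cat s t => tFF s ∪ tFF t
  | .kT e x y => tFF e ∪ tFF x ∪ tFF y
  | .app φ t => fFF φ ∪ tFF t
  | .bar φ t => fFF φ ∪ tFF t
def fFF : Func → Set ℕ
  | .fvar a => {a}
  | .lam _ t => tFF t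
end

/-! Substitution of a term for a number variable in terms / functors. -/
mutual
def tSubN (n : ℕ) (u : Term) : Term → Term
  | .var m => if m = n then u else .var m
  | .zero => .zero
  | .empt => .empt
  | .succ t => .succ (tSubN n u t)
  | .sing t => .sing (tSubN n u t)
  | .lh t => .lh (tSubN n u t)
  | .seqc t => .seqc (tSubN n u t)
  | .kU t => .kU (tSubN n u t)
  | .add s t => .add (tSubN n u s) (tSubN n u t)
  | .mul s t => .mul (tSubN n u s) (tSubN n u t)
  | .sub s t => .sub (tSubN n u s) (tSubN n u t)
  | .pair s t => .pair (tSubN n u s) (tSubN n u t)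
  | .cat s t => .cat (tSubN n u s) (tSubN n u t)
  | .kT e x y => .kT (tSubN n u e) (tSubN n u x) (tSubN n u y)
  | .app φ t => .app (fSubN n u φ) (tSubN n u t)
  | .bar φ t => .bar (fSubN n u φ) (tSubN n u t)
def fSubN (n : ℕ) (u : Term) : Func → Func
  | .fvar a => .fvar a
  | .lam x t => if x = n then .lam x t else .lam x (tSubN n u t)
end

/-! Substitution of a functor for a function variable in terms / functors. -/
mutual
def tSubF (a : ℕ) (ψ : Func) : Term → Term
  | .var m => .var m
  | .zero => .zero
  | .empt => .empt
  | .succ t => .succ (tSubF a ψ t)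
  | .sing t => .sing (tSubF a ψ t)
  | .lh t => .lh (tSubF a ψ t)
  | .seqc t => .seqc (tSubF a ψ t)
  | .kU t => .kU (tSubF a ψ t)
  | .add s t => .add (tSubF a ψ s) (tSubF a ψ t)
  | .mul s t => .mul (tSubF a ψ s) (tSubF a ψ t)
  | .sub s t => .sub (tSubF a ψ s) (tSubF a ψ t)
  | .pair s t => .pair (tSubF a ψ s) (tSubF a ψ t)
  | .cat s t => .cat (tSubF a ψ s) (tSubF a ψ t)
  | .kT e x y => .kT (tSubF a ψ e) (tSubF a ψ x) (tSubF a ψ y)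
  | .app φ t => .app (fSubF a ψ φ) (tSubF a ψ t)
  | .bar φ t => .bar (fSubF a ψ φ) (tSubF a ψ t)
def fSubF (a : ℕ) (ψ : Func) : Func → Func
  | .fvar b => if b = a then ψ else .fvar b
  | .lam x t => .lam x (tSubF a ψ t)
end

/-! "u is free for (the number variable) n" in a term/functor
(no free occurrence of n lies within a λ binding a variable free in u). -/
mutual
def tFForN (u : Term) (n : ℕ) : Term → Prop
  | .var _ => True
  | .zero => True
  | .empt => True
  | .succ t => tFForN u n t
  | .sing t => tFForN u n t
  | .lh t => tFForN u n t
  | .seqc t => tFForN u n t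
  | .kU t => tFForN u n t
  | .add s t => tFForN u n s ∧ tFForN u n t
  | .mul s t => tFForN u n s ∧ tFForN u n t
  | .sub s t => tFForN u n s ∧ tFForN u n t
  | .pair s t => tFForN u n s ∧ tFForN u n t
  | .cat s t => tFForN u n s ∧ tFForN u n t
  | .kT e x y => tFForN u n e ∧ tFForN u n x ∧ tFForN u n y
  | .app φ t => fFForN u n φ ∧ tFForN u n t
  | .bar φ t => fFForN u n φ ∧ tFForN u n t
def fFForN (u : Term) (n : ℕ) : Func → Prop
  | .fvar _ => True
  | .lam x t => x = n ∨ n ∉ tFN t ∨ (x ∉ tFN u ∧ tFForN u n t)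
end

/-! "ψ is free for (the function variable) a" in a term/functor. -/
mutual
def tFForF (ψ : Func) (a : ℕ) : Term → Prop
  | .var _ => True
  | .zero => True
  | .empt => True
  | .succ t => tFForF ψ a t
  | .sing t => tFForF ψ a t
  | .lh t => tFForF ψ a t
  | .seqc t => tFForF ψ a t
  | .kU t => tFForF ψ a t
  | .add s t => tFForF ψ a s ∧ tFForF ψ a t
  | .mul s t => tFForF ψ a s ∧ tFForF ψ a t
  | .sub s t => tFForF ψ a s ∧ tFForF ψ a t
  | .pair s t => tFForF ψ a s ∧ tFForF ψ a t
  | .cat s t => tFForF ψ a s ∧ tFForF ψ a t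
  | .kT e x y => tFForF ψ a e ∧ tFForF ψ a x ∧ tFForF ψ a y
  | .app φ t => fFForF ψ a φ ∧ tFForF ψ a t
  | .bar φ t => fFForF ψ a φ ∧ tFForF ψ a t
def fFForF (ψ : Func) (a : ℕ) : Func → Prop
  | .fvar _ => True
  | .lam x t => a ∉ tFF t ∨ (x ∉ fFN ψ ∧ tFForF ψ a t)
end

/-- Formulas of the two-sorted language; prime formulas are equations between
terms of type 0 (equality of type 1 is defined extensionally). -/
inductive Formula : Type
  | eq     : Term → Term → Formula
  | falsum : Formula
  | and    : Formula → Formula → Formula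
  | or     : Formula → Formula → Formula
  | imp    : Formula → Formula → Formula
  | allN   : ℕ → Formula → Formula
  | exN    : ℕ → Formula → Formula
  | allF   : ℕ → Formula → Formula
  | exF    : ℕ → Formula → Formula

namespace Formula

/-- ¬A -/
def neg (A : Formula) : Formula := A.imp .falsum
/-- ¬¬A -/
def nneg (A : Formula) : Formula := neg (neg A)
/-- A ↔ B -/
def iff (A B : Formula) : Formula := (A.imp B).and (B.imp A)

end Formula

open Formula

/-- s ≤ t, expressed by the primitive recursive constant ∸. -/
def tle (s t : Term) : Formula := .eq (Term.sub s t) Term.zero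
/-- s < t -/
def tlt (s t : Term) : Formula := tle (Term.succ s) t
/-- Seq(w) : w codes a finite sequence. -/
def seqF (t : Term) : Formula := .eq (Term.seqc t) Term.zero

/-- Free number variables of a formula. -/
def freeN : Formula → Set ℕ
  | .eq s t => tFN s ∪ tFN t
  | .falsum => ∅
  | .and A B => freeN A ∪ freeN B
  | .or A B => freeN A ∪ freeN B
  | .imp A B => freeN A ∪ freeN B
  | .allN x A => freeN A \ {x}
  | .exN x A => freeN A \ {x}
  | .allF _ A => freeN A
  | .exF _ A => freeN A

/-- Free function variables of a formula. -/
def freeF : Formula → Set ℕ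
  | .eq s t => tFF s ∪ tFF t
  | .falsum => ∅
  | .and A B => freeF A ∪ freeF B
  | .or A B => freeF A ∪ freeF B
  | .imp A B => freeF A ∪ freeF B
  | .allN _ A => freeF A
  | .exN _ A => freeF A
  | .allF a A => freeF A \ {a}
  | .exF a A => freeF A \ {a}

/-- Substitution A[u/n] of a term u for the number variable n. -/
def subN (n : ℕ) (u : Term) : Formula → Formula
  | .eq s t => .eq (tSubN n u s) (tSubN n u t)
  | .falsum => .falsum
  | .and A B => .and (subN n u A) (subN n u B)
  | .or A B => .or (subN n u A) (subN n u B)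
  | .imp A B => .imp (subN n u A) (subN n u B)
  | .allN x A => if x = n then .allN x A else .allN x (subN n u A)
  | .exN x A => if x = n then .exN x A else .exN x (subN n u A)
  | .allF a A => .allF a (subN n u A)
  | .exF a A => .exF a (subN n u A)

/-- Substitution A[ψ/a] of a functor ψ for the function variable a. -/
def subF (a : ℕ) (ψ : Func) : Formula → Formula
  | .eq s t => .eq (tSubF a ψ s) (tSubF a ψ t)
  | .falsum => .falsum
  | .and A B => .and (subF a ψ A) (subF a ψ B)
  | .or A B => .or (subF a ψ A) (subF a ψ B)
  | .imp A B => .imp (subF a ψ A) (subF a ψ B)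
  | .allN x A => .allN x (subF a ψ A)
  | .exN x A => .exN x (subF a ψ A)
  | .allF b A => if b = a then .allF b A else .allF b (subF a ψ A)
  | .exF b A => if b = a then .exF b A else .exF b (subF a ψ A)

/-- "The term u is free for the number variable n in A". -/
def FreeForN (u : Term) (n : ℕ) : Formula → Prop
  | .eq s t => tFForN u n s ∧ tFForN u n t
  | .falsum => True
  | .and A B => FreeForN u n A ∧ FreeForN u n B
  | .or A B => FreeForN u n A ∧ FreeForN u n B
  | .imp A B => FreeForN u n A ∧ FreeForN u n B
  | .allN m A => m = n ∨ n ∉ freeN A ∨ (m ∉ tFN u ∧ FreeForN u n A)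
  | .exN m A => m = n ∨ n ∉ freeN A ∨ (m ∉ tFN u ∧ FreeForN u n A)
  | .allF b A => n ∉ freeN A ∨ (b ∉ tFF u ∧ FreeForN u n A)
  | .exF b A => n ∉ freeN A ∨ (b ∉ tFF u ∧ FreeForN u n A)

/-- "The functor ψ is free for the function variable a in A". -/
def FreeForF (ψ : Func) (a : ℕ) : Formula → Prop
  | .eq s t => tFForF ψ a s ∧ tFForF ψ a t
  | .falsum => True
  | .and A B => FreeForF ψ a A ∧ FreeForF ψ a B
  | .or A B => FreeForF ψ a A ∧ FreeForF ψ a B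
  | .imp A B => FreeForF ψ a A ∧ FreeForF ψ a B
  | .allN m A => a ∉ freeF A ∨ (m ∉ fFN ψ ∧ FreeForF ψ a A)
  | .exN m A => a ∉ freeF A ∨ (m ∉ fFN ψ ∧ FreeForF ψ a A)
  | .allF b A => b = a ∨ a ∉ freeF A ∨ (b ∉ fFF ψ ∧ FreeForF ψ a A)
  | .exF b A => b = a ∨ a ∉ freeF A ∨ (b ∉ fFF ψ ∧ FreeForF ψ a A)

/-- Derivability from a set of (mathematical) axioms by two-sorted
intuitionistic predicate logic with equality at type 0 as sole prime relation;
a Hilbert-style system with modus ponens and generalization. -/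
inductive Prov (T : Set Formula) : Formula → Prop
  | ax {A : Formula} (h : A ∈ T) : Prov T A
  | k {A B : Formula} : Prov T (A.imp (B.imp A))
  | s {A B C : Formula} : Prov T ((A.imp (B.imp C)).imp ((A.imp B).imp (A.imp C)))
  | andI {A B : Formula} : Prov T (A.imp (B.imp (A.and B)))
  | andE1 {A B : Formula} : Prov T ((A.and B).imp A)
  | andE2 {A B : Formula} : Prov T ((A.and B).imp B)
  | orI1 {A B : Formula} : Prov T (A.imp (A.or B))
  | orI2 {A B : Formula} : Prov T (B.imp (A.or B))
  | orE {A B C : Formula} : Prov T ((A.imp C).imp ((B.imp C).imp ((A.or B).imp C)))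
  | exfalso {A : Formula} : Prov T (Formula.falsum.imp A)
  | mp {A B : Formula} : Prov T (A.imp B) → Prov T A → Prov T B
  | allNE {n : ℕ} {A : Formula} {u : Term} (h : FreeForN u n A) :
      Prov T ((Formula.allN n A).imp (subN n u A))
  | allNI {n : ℕ} {A B : Formula} (h : n ∉ freeN A) :
      Prov T (A.imp B) → Prov T (A.imp (Formula.allN n B))
  | exNI {n : ℕ} {A : Formula} {u : Term} (h : FreeForN u n A) :
      Prov T ((subN n u A).imp (Formula.exN n A))
  | exNE {n : ℕ} {A B : Formula} (h : n ∉ freeN B) :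
      Prov T (A.imp B) → Prov T ((Formula.exN n A).imp B)
  | allFE {a : ℕ} {A : Formula} {ψ : Func} (h : FreeForF ψ a A) :
      Prov T ((Formula.allF a A).imp (subF a ψ A))
  | allFI {a : ℕ} {A B : Formula} (h : a ∉ freeF A) :
      Prov T (A.imp B) → Prov T (A.imp (Formula.allF a B))
  | exFI {a : ℕ} {A : Formula} {ψ : Func} (h : FreeForF ψ a A) :
      Prov T ((subF a ψ A).imp (Formula.exF a A))
  | exFE {a : ℕ} {A B : Formula} (h : a ∉ freeF B) :
      Prov T (A.imp B) → Prov T ((Formula.exF a A).imp B)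
  | genN {n : ℕ} {A : Formula} : Prov T A → Prov T (Formula.allN n A)
  | genF {a : ℕ} {A : Formula} : Prov T A → Prov T (Formula.allF a A)

/-- Two systems (sets of axioms over the same language) have the same theorems. -/
def SameTheory (T₁ T₂ : Set Formula) : Prop := ∀ A, Prov T₁ A ↔ Prov T₂ A

/-- T₁ is a subsystem of T₂: every theorem of T₁ is a theorem of T₂. -/
def Subsystem (T₁ T₂ : Set Formula) : Prop := ∀ A, Prov T₁ A → Prov T₂ A

/-- The Gödel–Gentzen negative translation: hereditarily replace A∨B by
¬(¬A & ¬B) and ∃A by ¬∀¬A (prime formulas, being equations between terms of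
type 0, are their own translations). -/
def gTrans : Formula → Formula
  | .eq s t => .eq s t
  | .falsum => .falsum
  | .and A B => .and (gTrans A) (gTrans B)
  | .or A B => Formula.neg ((Formula.neg (gTrans A)).and (Formula.neg (gTrans B)))
  | .imp A B => .imp (gTrans A) (gTrans B)
  | .allN x A => .allN x (gTrans A)
  | .exN x A => Formula.neg (.allN x (Formula.neg (gTrans A)))
  | .allF a A => .allF a (gTrans A)
  | .exF a A => Formula.neg (.allF a (Formula.neg (gTrans A)))

/-! ### The base system IA₁ -/

/-- Universally valid equations: the defining axioms of the finitely many
primitive recursive constants of the language (all equations true in the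
intended interpretation under every assignment). -/
def validEq : Set Formula :=
  {F | ∃ s t : Term, F = Formula.eq s t ∧ ∀ ρ σ, evalT ρ σ s = evalT ρ σ t}

/-- Leibniz equality schema (includes the open equality axiom
∀x∀y(x=y → α(x)=α(y))). -/
def eqAx : Set Formula :=
  {F | ∃ (n : ℕ) (s t : Term) (A : Formula),
    FreeForN s n A ∧ FreeForN t n A ∧
    F = (Formula.eq s t).imp ((subN n s A).imp (subN n t A))}

/-- Successor axioms. -/
def sucAx : Set Formula :=
  {F | ∃ s t : Term, F = (Formula.eq (Term.succ s) (Term.succ t)).imp (.eq s t)} ∪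
  {F | ∃ t : Term, F = Formula.neg (.eq (Term.succ t) Term.zero)}

/-- Mathematical induction, for all formulas of the two-sorted language. -/
def indAx : Set Formula :=
  {F | ∃ (x : ℕ) (A : Formula),
    F = ((subN x Term.zero A).and
          (Formula.allN x (A.imp (subN x (Term.succ (Term.var x)) A)))).imp
        (Formula.allN x A)}

/-- λ-reduction: (λx.t)(s) = t[s/x], for s free for x in t. -/
def lamAx : Set Formula :=
  {F | ∃ (x : ℕ) (t s : Term), tFForN s x t ∧
    F = Formula.eq (Term.app (Func.lam x t) s) (tSubN x s t)}

/-- IA₁: two-sorted intuitionistic arithmetic. -/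
def IA1 : Set Formula := validEq ∪ eqAx ∪ sucAx ∪ indAx ∪ lamAx

/-- The double negation schema ¬¬A → A of classical logic. -/
def DNE : Set Formula := {F | ∃ A : Formula, F = (Formula.nneg A).imp A}

/-- The Gödel–Gentzen negative translations of all theorems of S + (¬¬A→A). -/
def gThms (S : Set Formula) : Set Formula :=
  {F | ∃ A : Formula, Prov (S ∪ DNE) A ∧ F = gTrans A}

/-- The minimum classical extension S^{+g} of S: the least extension of S
proving the negative translation of every theorem of S + (¬¬A→A). -/
def minClassExt (S : Set Formula) : Set Formula := S ∪ gThms S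

/-! ### Classes of formulas -/

/-- "Quantifier-free" formulas: no function quantifiers and only bounded
number quantifiers. -/
inductive IsQF : Formula → Prop
  | eq (s t : Term) : IsQF (.eq s t)
  | falsum : IsQF .falsum
  | and {A B} : IsQF A → IsQF B → IsQF (A.and B)
  | or {A B} : IsQF A → IsQF B → IsQF (A.or B)
  | imp {A B} : IsQF A → IsQF B → IsQF (A.imp B)
  | ballN {x t A} (h : x ∉ tFN t) (hA : IsQF A) :
      IsQF (.allN x ((tle (Term.var x) t).imp A))
  | bexN {x t A} (h : x ∉ tFN t) (hA : IsQF A) :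
      IsQF (.exN x ((tle (Term.var x) t).and A))

/-- Arithmetical formulas: no function quantifiers (function parameters allowed). -/
def IsArith : Formula → Prop
  | .eq _ _ => True
  | .falsum => True
  | .and A B => IsArith A ∧ IsArith B
  | .or A B => IsArith A ∧ IsArith B
  | .imp A B => IsArith A ∧ IsArith B
  | .allN _ A => IsArith A
  | .exN _ A => IsArith A
  | .allF _ _ => False
  | .exF _ _ => False

/-- Negative formulas: containing neither ∨ nor ∃. -/
def IsNeg : Formula → Prop
  | .eq _ _ => True
  | .falsum => True
  | .and A B => IsNeg A ∧ IsNeg B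
  | .or _ _ => False
  | .imp A B => IsNeg A ∧ IsNeg B
  | .allN _ A => IsNeg A
  | .exN _ _ => False
  | .allF _ A => IsNeg A
  | .exF _ _ => False

/-! ### The axiom schemas -/

/-- An instance of countable choice AC₀₀ : ∀x∃yA(x,y) → ∃α∀xA(x,α(x)). -/
def ac00Inst (x y a : ℕ) (A : Formula) : Formula :=
  (Formula.allN x (.exN y A)).imp
    (.exF a (.allN x (subN y (Term.app (Func.fvar a) (Term.var x)) A)))

def ac00Side (x y a : ℕ) (A : Formula) : Prop :=
  x ≠ y ∧ a ∉ freeF A ∧ FreeForN (Term.app (Func.fvar a) (Term.var x)) y A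

/-- AC₀₀ (full countable choice for numbers). -/
def AC00 : Set Formula :=
  {F | ∃ x y a A, ac00Side x y a A ∧ F = ac00Inst x y a A}

/-- qf-AC₀₀. -/
def qfAC00 : Set Formula :=
  {F | ∃ x y a A, IsQF A ∧ ac00Side x y a A ∧ F = ac00Inst x y a A}

/-- AC^Ar₀₀ (arithmetical countable choice). -/
def arAC00 : Set Formula :=
  {F | ∃ x y a A, IsArith A ∧ ac00Side x y a A ∧ F = ac00Inst x y a A}

/-- ∃!y A, rendered as ∃yA & ∀y∀z(A & A[z/y] → y = z). -/
def exUnique (y z : ℕ) (A : Formula) : Formula :=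
  (Formula.exN y A).and
    (.allN y (.allN z ((A.and (subN y (Term.var z) A)).imp
      (.eq (Term.var y) (Term.var z)))))

/-- AC₀₀! (countable comprehension): ∀x∃!yA(x,y) → ∃α∀xA(x,α(x)). -/
def AC00u : Set Formula :=
  {F | ∃ x y z a A, z ≠ y ∧ z ∉ freeN A ∧ FreeForN (Term.var z) y A ∧
    ac00Side x y a A ∧
    F = (Formula.allN x (exUnique y z A)).imp
          (.exF a (.allN x (subN y (Term.app (Func.fvar a) (Term.var x)) A)))}

/-- AC₀₁ : ∀x∃αA(x,α) → ∃β∀xA(x,λy.β(⟨x,y⟩)). -/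
def AC01 : Set Formula :=
  {F | ∃ (x a b y : ℕ) (A : Formula), b ∉ freeF A ∧ b ≠ a ∧ y ≠ x ∧
    FreeForF (Func.lam y (Term.app (Func.fvar b)
      (Term.pair (Term.var x) (Term.var y)))) a A ∧
    F = (Formula.allN x (.exF a A)).imp
          (.exF b (.allN x (subF a (Func.lam y (Term.app (Func.fvar b)
            (Term.pair (Term.var x) (Term.var y)))) A)))}

/-- CF_d : ∀x(A(x) ∨ ¬A(x)) → ∃α∀x[α(x)≤1 & (α(x)=0 ↔ A(x))]. -/
def CFd : Set Formula :=
  {F | ∃ (x a : ℕ) (A : Formula), a ∉ freeF A ∧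
    F = (Formula.allN x (A.or (Formula.neg A))).imp
          (.exF a (.allN x ((tle (Term.app (Func.fvar a) (Term.var x))
              (Term.succ Term.zero)).and
            (Formula.iff (.eq (Term.app (Func.fvar a) (Term.var x)) Term.zero) A))))}

/-- WCF₀⁻ : ¬¬∃ζ∀x(ζ(x)=0 ↔ A(x)) for negative A. -/
def WCF0neg : Set Formula :=
  {F | ∃ (x z : ℕ) (A : Formula), IsNeg A ∧ z ∉ freeF A ∧
    F = Formula.nneg (.exF z (.allN x
      (Formula.iff (.eq (Term.app (Func.fvar z) (Term.var x)) Term.zero) A)))}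

/-- Markov's Principle MP₁ : ∀α(¬∀x¬α(x)=0 → ∃x α(x)=0). -/
def MP1 : Formula :=
  .allF 0 ((Formula.neg (.allN 0 (Formula.neg
      (.eq (Term.app (Func.fvar 0) (Term.var 0)) Term.zero)))).imp
    (.exN 0 (.eq (Term.app (Func.fvar 0) (Term.var 0)) Term.zero)))

/-- Σ⁰₁-DNS₀ : ∀α[∀x¬¬∃y α(⟨x,y⟩)=0 → ¬¬∀x∃y α(⟨x,y⟩)=0]. -/
def Sigma01DNS0 : Formula :=
  .allF 0 ((Formula.allN 0 (Formula.nneg (.exN 1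
      (.eq (Term.app (Func.fvar 0) (Term.pair (Term.var 0) (Term.var 1))) Term.zero)))).imp
    (Formula.nneg (.allN 0 (.exN 1
      (.eq (Term.app (Func.fvar 0) (Term.pair (Term.var 0) (Term.var 1))) Term.zero)))))

/-- DNS₁ : ∀ρ[∀α¬¬∃x ρ(ᾱ(x))=0 → ¬¬∀α∃x ρ(ᾱ(x))=0]. -/
def DNS1 : Formula :=
  .allF 0 ((Formula.allF 1 (Formula.nneg (.exN 0
      (.eq (Term.app (Func.fvar 0) (Term.bar (Func.fvar 1) (Term.var 0))) Term.zero)))).imp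
    (Formula.nneg (.allF 1 (.exN 0
      (.eq (Term.app (Func.fvar 0) (Term.bar (Func.fvar 1) (Term.var 0))) Term.zero)))))

/-- B(α) : α is a binary sequence, ∀x α(x) ≤ 1. -/
def binF (a x : ℕ) : Formula :=
  .allN x (tle (Term.app (Func.fvar a) (Term.var x)) (Term.succ Term.zero))

/-- GDK : ∀ρ[∀α_{B(α)}¬¬∃x ρ(ᾱ(x))=0 → ¬¬∀α_{B(α)}∃x ρ(ᾱ(x))=0]. -/
def GDK : Formula :=
  .allF 0 ((Formula.allF 1 ((binF 1 1).imp (Formula.nneg (.exN 0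
      (.eq (Term.app (Func.fvar 0) (Term.bar (Func.fvar 1) (Term.var 0))) Term.zero))))).imp
    (Formula.nneg (.allF 1 ((binF 1 1).imp (.exN 0
      (.eq (Term.app (Func.fvar 0) (Term.bar (Func.fvar 1) (Term.var 0))) Term.zero))))))

/-- FT₁ (the fan theorem):
∀ρ[∀α_{B(α)}∃x ρ(ᾱ(x))=0 → ∃n∀α_{B(α)}∃x≤n ρ(ᾱ(x))=0]. -/
def FT1 : Formula :=
  .allF 0 ((Formula.allF 1 ((binF 1 1).imp (.exN 0
      (.eq (Term.app (Func.fvar 0) (Term.bar (Func.fvar 1) (Term.var 0))) Term.zero)))).imp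
    (.exN 2 (.allF 1 ((binF 1 1).imp (.exN 0 ((tle (Term.var 0) (Term.var 2)).and
      (.eq (Term.app (Func.fvar 0) (Term.bar (Func.fvar 1) (Term.var 0))) Term.zero)))))))

/-- An instance of bar induction BI₁ with bar ρ (function variable r) and
inductive predicate A(w). -/
def biInst (r aa xv w s : ℕ) (A : Formula) : Formula :=
  ((Formula.allF aa (.exN xv (.eq
      (Term.app (Func.fvar r) (Term.bar (Func.fvar aa) (Term.var xv))) Term.zero))).and
    ((Formula.allN w (((seqF (Term.var w)).and
        (.eq (Term.app (Func.fvar r) (Term.var w)) Term.zero)).imp A)).and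
      (Formula.allN w (((seqF (Term.var w)).and
        (.allN s (subN w (Term.cat (Term.var w)
          (Term.sing (Term.succ (Term.var s)))) A))).imp A)))).imp
  (subN w Term.empt A)

/-- BI₁ (bar induction, Kleene's ˣ26.3b). -/
def BI1 : Set Formula :=
  {F | ∃ r aa xv w s A, aa ≠ r ∧ aa ∉ freeF A ∧ s ≠ w ∧ s ∉ freeN A ∧
    FreeForN (Term.cat (Term.var w) (Term.sing (Term.succ (Term.var s)))) w A ∧
    F = biInst r aa xv w s A}

/-- Π⁰₁-WCF₀ : ∀α¬¬∃ζ∀x(ζ(x)=0 ↔ ∀y α(⟨x,y⟩)=0). -/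
def Pi01WCF0 : Formula :=
  .allF 0 (Formula.nneg (.exF 1 (.allN 0
    (Formula.iff (.eq (Term.app (Func.fvar 1) (Term.var 0)) Term.zero)
      (.allN 1 (.eq (Term.app (Func.fvar 0)
        (Term.pair (Term.var 0) (Term.var 1))) Term.zero))))))

/-- Π¹₁-WCF₀ : ∀γ¬¬∃ζ∀x(ζ(x)=0 ↔ ∀α∃y γ(ᾱ(⟨x,y⟩))=0). -/
def Pi11WCF0 : Formula :=
  .allF 0 (Formula.nneg (.exF 1 (.allN 0
    (Formula.iff (.eq (Term.app (Func.fvar 1) (Term.var 0)) Term.zero)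
      (.allF 2 (.exN 1 (.eq (Term.app (Func.fvar 0)
        (Term.bar (Func.fvar 2) (Term.pair (Term.var 0) (Term.var 1)))) Term.zero)))))))

/-- T(e,x,y) as a formula. -/
def TFml (e x y : Term) : Formula := .eq (Term.kT e x y) Term.zero

/-- GR(φ): "φ is general recursive",
∃e[∀x∃yT(e,x,y) & ∀x∀y(T(e,x,y) → U(y)=φ(x))]. -/
def GRof (φ : Func) : Formula :=
  .exN 0 ((Formula.allN 1 (.exN 2 (TFml (Term.var 0) (Term.var 1) (Term.var 2)))).and
    (.allN 1 (.allN 2 ((TFml (Term.var 0) (Term.var 1) (Term.var 2)).imp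
      (.eq (Term.kU (Term.var 2)) (Term.app φ (Term.var 1)))))))

/-- Church's Thesis CT₁ : ∀α GR(α). -/
def CT1 : Formula := .allF 0 (GRof (Func.fvar 0))

/-- ∀α¬¬GR(α). -/
def nnGR : Formula := .allF 0 (Formula.nneg (GRof (Func.fvar 0)))

/-- {τ}[α](x) = y in Kleene's sense: τ(⟨x⟩∗ᾱ(y)) > 0 with minimal y,
used to state continuous choice. -/
def ccApp (t a x y : ℕ) : Formula :=
  .eq (Term.app (Func.fvar t)
    (Term.cat (Term.sing (Term.var x)) (Term.bar (Func.fvar a) (Term.var y)))) Term.zero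

/-- An instance of Kleene's strong continuous choice CC₁₁ (Brouwer's principle
for functions, ˣ27.1): ∀α∃βA(α,β) → ∃τ∀α[{τ}[α] is completely defined &
∀β({τ}[α] = β → A(α,β))]. -/
def cc11Inst (a b t x y z : ℕ) (A : Formula) : Formula :=
  (Formula.allF a (.exF b A)).imp
    (.exF t (.allF a
      ((Formula.allN x (.exN y (Formula.neg (ccApp t a x y)))).and
        (.allF b ((Formula.allN x (.exN y
          ((Formula.eq (Term.app (Func.fvar t) (Term.cat (Term.sing (Term.var x))
              (Term.bar (Func.fvar a) (Term.var y))))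
            (Term.succ (Term.app (Func.fvar b) (Term.var x)))).and
           (.allN z ((tlt (Term.var z) (Term.var y)).imp (ccApp t a x z)))))).imp A)))))

/-- CC₁₁ as a schema. -/
def CC11 : Set Formula :=
  {F | ∃ a b t x y z A, t ∉ freeF A ∧ t ≠ a ∧ t ≠ b ∧ a ≠ b ∧
    x ∉ freeN A ∧ y ∉ freeN A ∧ z ∉ freeN A ∧
    x ≠ y ∧ y ≠ z ∧ x ≠ z ∧
    F = cc11Inst a b t x y z A}

/-! ### The systems -/

/-- Intuitionistic recursive analysis IRA = IA₁ + qf-AC₀₀. -/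
def IRA : Set Formula := IA1 ∪ qfAC00

/-- Kleene's basic system B = IA₁ + AC₀₁ + BI₁. -/
def Bsys : Set Formula := IA1 ∪ AC01 ∪ BI1

/-- Markov's recursive analysis MRA = IRA + CT₁ + MP₁. -/
def MRA : Set Formula := IRA ∪ {CT1, MP1}

/-- The subsystems of B considered in Theorem 5.1. -/
def theoremSystems : List (Set Formula) :=
  [IA1, IRA, IA1 ∪ arAC00, IA1 ∪ AC00u, IA1 ∪ AC00, IA1 ∪ AC01,
   IA1 ∪ {FT1}, IRA ∪ {FT1}, IRA ∪ BI1, IA1 ∪ AC00 ∪ BI1, Bsys]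

end NegInterp


namespace NegInterp

/-! ### Propositional helper layer: reasoning under a list of hypotheses. -/

def ctxImp : List Formula → Formula → Formula
  | [], A => A
  | H :: Γ, A => H.imp (ctxImp Γ A)

theorem ctxImp_append (Γ : List Formula) (X A : Formula) :
    ctxImp (Γ ++ [X]) A = ctxImp Γ (X.imp A) := by
  induction Γ with
  | nil => rfl
  | cons H Γ ih => simp [ctxImp, ih]

variable {T : Set Formula}

/-- Identity A → A. -/
theorem pid {A : Formula} : Prov T (A.imp A) :=
  Prov.mp (Prov.mp Prov.s (Prov.k (B := A.imp A))) Prov.k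

/-- Transitivity of implication. -/
theorem ptrans {A B C : Formula} (h1 : Prov T (A.imp B)) (h2 : Prov T (B.imp C)) :
    Prov T (A.imp C) :=
  Prov.mp (Prov.mp Prov.s (Prov.mp Prov.k h2)) h1

/-- Lift an implication under a hypothesis. -/
theorem liftImp {H P Q : Formula} (h : Prov T (P.imp Q)) :
    Prov T ((H.imp P).imp (H.imp Q)) :=
  Prov.mp Prov.s (Prov.mp Prov.k h)

/-- Swap hypotheses. -/
theorem pswap {A B C : Formula} (h : Prov T (A.imp (B.imp C))) :
    Prov T (B.imp (A.imp C)) :=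
  ptrans Prov.k (Prov.mp Prov.s h)

theorem ctxS : ∀ (Γ : List Formula) (X Y : Formula),
    Prov T ((ctxImp Γ (X.imp Y)).imp ((ctxImp Γ X).imp (ctxImp Γ Y)))
  | [], _, _ => pid
  | H :: Γ, X, Y => ptrans (liftImp (ctxS Γ X Y)) Prov.s

theorem cK {A : Formula} (h : Prov T A) : ∀ Γ, Prov T (ctxImp Γ A)
  | [] => h
  | _ :: Γ => Prov.mp Prov.k (cK h Γ)

theorem cMP {Γ : List Formula} {X Y : Formula}
    (h1 : Prov T (ctxImp Γ (X.imp Y))) (h2 : Prov T (ctxImp Γ X)) :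
    Prov T (ctxImp Γ Y) :=
  Prov.mp (Prov.mp (ctxS Γ X Y) h1) h2

theorem cId {A : Formula} : ∀ Γ, Prov T (A.imp (ctxImp Γ A))
  | [] => pid
  | _ :: Γ => ptrans (cId Γ) Prov.k

theorem cHyp {A : Formula} : ∀ {Γ : List Formula}, A ∈ Γ → Prov T (ctxImp Γ A)
  | H :: Γ, h => by
      rcases List.mem_cons.1 h with h | h
      · subst h; exact cId Γ
      · exact Prov.mp Prov.k (cHyp h)

/-- Discharge the last hypothesis. -/
theorem cIntro {Γ : List Formula} {X Y : Formula}
    (h : Prov T (ctxImp (Γ ++ [X]) Y)) : Prov T (ctxImp Γ (X.imp Y)) :=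
  (ctxImp_append Γ X Y) ▸ h

theorem contrap {X Y : Formula} (h : Prov T (X.imp Y)) :
    Prov T ((Formula.neg Y).imp (Formula.neg X)) := by
  have : Prov T (ctxImp [Formula.neg Y, X] .falsum) :=
    cMP (cHyp (by simp [Formula.neg])) (cMP (cK h _) (cHyp (by simp)))
  exact this

theorem dni {X : Formula} : Prov T (X.imp (Formula.nneg X)) :=
  pswap (pid (A := Formula.neg X))

theorem dcontrap {X Y : Formula} (h : Prov T (X.imp Y)) :
    Prov T ((Formula.nneg X).imp (Formula.nneg Y)) :=
  contrap (contrap h)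

theorem negStab {X : Formula} :
    Prov T ((Formula.nneg (Formula.neg X)).imp (Formula.neg X)) :=
  contrap (dni (X := X))

theorem pairImp {H X Y : Formula} (h1 : Prov T (H.imp X)) (h2 : Prov T (H.imp Y)) :
    Prov T (H.imp (X.and Y)) :=
  Prov.mp (Prov.mp Prov.s (ptrans h1 Prov.andI)) h2

/-! ### Syntactic meta-lemmas on terms and functors. -/

mutual
theorem tSubN_var_self (x : ℕ) : ∀ t : Term, tSubN x (.var x) t = t
  | .var m => by by_cases h : m = x <;> simp [tSubN, h]
  | .zero => rfl
  | .empt => rfl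
  | .succ t => by rw [tSubN, tSubN_var_self x t]
  | .sing t => by rw [tSubN, tSubN_var_self x t]
  | .lh t => by rw [tSubN, tSubN_var_self x t]
  | .seqc t => by rw [tSubN, tSubN_var_self x t]
  | .kU t => by rw [tSubN, tSubN_var_self x t]
  | .add s t => by rw [tSubN, tSubN_var_self x s, tSubN_var_self x t]
  | .mul s t => by rw [tSubN, tSubN_var_self x s, tSubN_var_self x t]
  | .sub s t => by rw [tSubN, tSubN_var_self x s, tSubN_var_self x t]
  | .pair s t => by rw [tSubN, tSubN_var_self x s, tSubN_var_self x t]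
  | .cat s t => by rw [tSubN, tSubN_var_self x s, tSubN_var_self x t]
  | .kT e a b => by rw [tSubN, tSubN_var_self x e, tSubN_var_self x a, tSubN_var_self x b]
  | .app φ t => by rw [tSubN, fSubN_var_self x φ, tSubN_var_self x t]
  | .bar φ t => by rw [tSubN, fSubN_var_self x φ, tSubN_var_self x t]
theorem fSubN_var_self (x : ℕ) : ∀ φ : Func, fSubN x (.var x) φ = φ
  | .fvar a => rfl
  | .lam y t => by
      by_cases h : y = x <;> simp [fSubN, h]
      exact tSubN_var_self x t
end

mutual
theorem tSubN_notFree (n : ℕ) (u : Term) : ∀ t : Term, n ∉ tFN t → tSubN n u t = t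
  | .var m => by intro h; simp [tFN] at h; rw [tSubN, if_neg (fun hmn => h hmn.symm)]
  | .zero => fun _ => rfl
  | .empt => fun _ => rfl
  | .succ t => by intro h; simp [tFN] at h; rw [tSubN, tSubN_notFree n u t h]
  | .sing t => by intro h; simp [tFN] at h; rw [tSubN, tSubN_notFree n u t h]
  | .lh t => by intro h; simp [tFN] at h; rw [tSubN, tSubN_notFree n u t h]
  | .seqc t => by intro h; simp [tFN] at h; rw [tSubN, tSubN_notFree n u t h]
  | .kU t => by intro h; simp [tFN] at h; rw [tSubN, tSubN_notFree n u t h]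
  | .add s t => by
      intro h; simp [tFN] at h
      rw [tSubN, tSubN_notFree n u s h.1, tSubN_notFree n u t h.2]
  | .mul s t => by
      intro h; simp [tFN] at h
      rw [tSubN, tSubN_notFree n u s h.1, tSubN_notFree n u t h.2]
  | .sub s t => by
      intro h; simp [tFN] at h
      rw [tSubN, tSubN_notFree n u s h.1, tSubN_notFree n u t h.2]
  | .pair s t => by
      intro h; simp [tFN] at h
      rw [tSubN, tSubN_notFree n u s h.1, tSubN_notFree n u t h.2]
  | .cat s t => by
      intro h; simp [tFN] at h
      rw [tSubN, tSubN_notFree n u s h.1, tSubN_notFree n u t h.2]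
  | .kT e a b => by
      intro h; simp [tFN] at h
      rw [tSubN, tSubN_notFree n u e h.1.1, tSubN_notFree n u a h.1.2,
        tSubN_notFree n u b h.2]
  | .app φ t => by
      intro h; simp [tFN] at h
      rw [tSubN, fSubN_notFree n u φ h.1, tSubN_notFree n u t h.2]
  | .bar φ t => by
      intro h; simp [tFN] at h
      rw [tSubN, fSubN_notFree n u φ h.1, tSubN_notFree n u t h.2]
theorem fSubN_notFree (n : ℕ) (u : Term) : ∀ φ : Func, n ∉ fFN φ → fSubN n u φ = φ
  | .fvar a => fun _ => rfl
  | .lam y t => by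
      intro h; simp [fFN] at h
      by_cases hy : y = n
      · simp [fSubN, hy]
      · simp [fSubN, hy]
        exact tSubN_notFree n u t (fun hn => hy ((h hn).symm))
end

mutual
theorem tFForN_notFree (u : Term) (n : ℕ) : ∀ t : Term, n ∉ tFN t → tFForN u n t
  | .var _ => fun _ => trivial
  | .zero => fun _ => trivial
  | .empt => fun _ => trivial
  | .succ t => by intro h; simp [tFN] at h; exact tFForN_notFree u n t h
  | .sing t => by intro h; simp [tFN] at h; exact tFForN_notFree u n t h
  | .lh t => by intro h; simp [tFN] at h; exact tFForN_notFree u n t h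
  | .seqc t => by intro h; simp [tFN] at h; exact tFForN_notFree u n t h
  | .kU t => by intro h; simp [tFN] at h; exact tFForN_notFree u n t h
  | .add s t => by
      intro h; simp [tFN] at h
      exact ⟨tFForN_notFree u n s h.1, tFForN_notFree u n t h.2⟩
  | .mul s t => by
      intro h; simp [tFN] at h
      exact ⟨tFForN_notFree u n s h.1, tFForN_notFree u n t h.2⟩
  | .sub s t => by
      intro h; simp [tFN] at h
      exact ⟨tFForN_notFree u n s h.1, tFForN_notFree u n t h.2⟩
  | .pair s t => by
      intro h; simp [tFN] at h
      exact ⟨tFForN_notFree u n s h.1, tFForN_notFree u n t h.2⟩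
  | .cat s t => by
      intro h; simp [tFN] at h
      exact ⟨tFForN_notFree u n s h.1, tFForN_notFree u n t h.2⟩
  | .kT e a b => by
      intro h; simp [tFN] at h
      exact ⟨tFForN_notFree u n e h.1.1, tFForN_notFree u n a h.1.2,
        tFForN_notFree u n b h.2⟩
  | .app φ t => by
      intro h; simp [tFN] at h
      exact ⟨fFForN_notFree u n φ h.1, tFForN_notFree u n t h.2⟩
  | .bar φ t => by
      intro h; simp [tFN] at h
      exact ⟨fFForN_notFree u n φ h.1, tFForN_notFree u n t h.2⟩
theorem fFForN_notFree (u : Term) (n : ℕ) : ∀ φ : Func, n ∉ fFN φ → fFForN u n φ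
  | .fvar _ => fun _ => trivial
  | .lam y t => by
      intro h; simp [fFN] at h
      by_cases hy : y = n
      · exact Or.inl hy
      · exact Or.inr (Or.inl fun hn => hy ((h hn).symm))
end

mutual
theorem tSubF_fvar_self (a : ℕ) : ∀ t : Term, tSubF a (.fvar a) t = t
  | .var m => rfl
  | .zero => rfl
  | .empt => rfl
  | .succ t => by rw [tSubF, tSubF_fvar_self a t]
  | .sing t => by rw [tSubF, tSubF_fvar_self a t]
  | .lh t => by rw [tSubF, tSubF_fvar_self a t]
  | .seqc t => by rw [tSubF, tSubF_fvar_self a t]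
  | .kU t => by rw [tSubF, tSubF_fvar_self a t]
  | .add s t => by rw [tSubF, tSubF_fvar_self a s, tSubF_fvar_self a t]
  | .mul s t => by rw [tSubF, tSubF_fvar_self a s, tSubF_fvar_self a t]
  | .sub s t => by rw [tSubF, tSubF_fvar_self a s, tSubF_fvar_self a t]
  | .pair s t => by rw [tSubF, tSubF_fvar_self a s, tSubF_fvar_self a t]
  | .cat s t => by rw [tSubF, tSubF_fvar_self a s, tSubF_fvar_self a t]
  | .kT e s t => by rw [tSubF, tSubF_fvar_self a e, tSubF_fvar_self a s, tSubF_fvar_self a t]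
  | .app φ t => by rw [tSubF, fSubF_fvar_self a φ, tSubF_fvar_self a t]
  | .bar φ t => by rw [tSubF, fSubF_fvar_self a φ, tSubF_fvar_self a t]
theorem fSubF_fvar_self (a : ℕ) : ∀ φ : Func, fSubF a (.fvar a) φ = φ
  | .fvar b => by by_cases h : b = a <;> simp [fSubF, h]
  | .lam y t => by rw [fSubF, tSubF_fvar_self a t]
end

mutual
theorem tFForN_var (x : ℕ) : ∀ t : Term, tFForN (.var x) x t
  | .var _ => trivial
  | .zero => trivial
  | .empt => trivial
  | .succ t => tFForN_var x t
  | .sing t => tFForN_var x t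
  | .lh t => tFForN_var x t
  | .seqc t => tFForN_var x t
  | .kU t => tFForN_var x t
  | .add s t => ⟨tFForN_var x s, tFForN_var x t⟩
  | .mul s t => ⟨tFForN_var x s, tFForN_var x t⟩
  | .sub s t => ⟨tFForN_var x s, tFForN_var x t⟩
  | .pair s t => ⟨tFForN_var x s, tFForN_var x t⟩
  | .cat s t => ⟨tFForN_var x s, tFForN_var x t⟩
  | .kT e s t => ⟨tFForN_var x e, tFForN_var x s, tFForN_var x t⟩
  | .app φ t => ⟨fFForN_var x φ, tFForN_var x t⟩
  | .bar φ t => ⟨fFForN_var x φ, tFForN_var x t⟩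
theorem fFForN_var (x : ℕ) : ∀ φ : Func, fFForN (.var x) x φ
  | .fvar _ => trivial
  | .lam y t => by
      by_cases h : y = x
      · exact Or.inl h
      · exact Or.inr (Or.inr ⟨by simp [tFN, h], tFForN_var x t⟩)
end

mutual
theorem tFForF_fvar (a : ℕ) : ∀ t : Term, tFForF (.fvar a) a t
  | .var _ => trivial
  | .zero => trivial
  | .empt => trivial
  | .succ t => tFForF_fvar a t
  | .sing t => tFForF_fvar a t
  | .lh t => tFForF_fvar a t
  | .seqc t => tFForF_fvar a t
  | .kU t => tFForF_fvar a t
  | .add s t => ⟨tFForF_fvar a s, tFForF_fvar a t⟩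
  | .mul s t => ⟨tFForF_fvar a s, tFForF_fvar a t⟩
  | .sub s t => ⟨tFForF_fvar a s, tFForF_fvar a t⟩
  | .pair s t => ⟨tFForF_fvar a s, tFForF_fvar a t⟩
  | .cat s t => ⟨tFForF_fvar a s, tFForF_fvar a t⟩
  | .kT e s t => ⟨tFForF_fvar a e, tFForF_fvar a s, tFForF_fvar a t⟩
  | .app φ t => ⟨fFForF_fvar a φ, tFForF_fvar a t⟩
  | .bar φ t => ⟨fFForF_fvar a φ, tFForF_fvar a t⟩
theorem fFForF_fvar (a : ℕ) : ∀ φ : Func, fFForF (.fvar a) a φ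
  | .fvar _ => trivial
  | .lam y t => Or.inr ⟨by simp [fFN], tFForF_fvar a t⟩
end

/-! Fresh-variable machinery. -/

mutual
def tBound : Term → ℕ
  | .var n => n + 1
  | .zero => 0
  | .empt => 0
  | .succ t => tBound t
  | .sing t => tBound t
  | .lh t => tBound t
  | .seqc t => tBound t
  | .kU t => tBound t
  | .add s t => max (tBound s) (tBound t)
  | .mul s t => max (tBound s) (tBound t)
  | .sub s t => max (tBound s) (tBound t)
  | .pair s t => max (tBound s) (tBound t)
  | .cat s t => max (tBound s) (tBound t)
  | .kT e s t => max (max (tBound e) (tBound s)) (tBound t)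
  | .app φ t => max (fBound φ) (tBound t)
  | .bar φ t => max (fBound φ) (tBound t)
def fBound : Func → ℕ
  | .fvar _ => 0
  | .lam _ t => tBound t
end

mutual
theorem tBound_spec (n : ℕ) : ∀ t : Term, tBound t ≤ n → n ∉ tFN t
  | .var m => by intro h; simp [tBound] at h; simp [tFN]; omega
  | .zero => by intro _; simp [tFN]
  | .empt => by intro _; simp [tFN]
  | .succ t => fun h => tBound_spec n t h
  | .sing t => fun h => tBound_spec n t h
  | .lh t => fun h => tBound_spec n t h
  | .seqc t => fun h => tBound_spec n t h
  | .kU t => fun h => tBound_spec n t h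
  | .add s t => by
      intro h; simp [tBound] at h; simp [tFN]
      exact ⟨tBound_spec n s h.1, tBound_spec n t h.2⟩
  | .mul s t => by
      intro h; simp [tBound] at h; simp [tFN]
      exact ⟨tBound_spec n s h.1, tBound_spec n t h.2⟩
  | .sub s t => by
      intro h; simp [tBound] at h; simp [tFN]
      exact ⟨tBound_spec n s h.1, tBound_spec n t h.2⟩
  | .pair s t => by
      intro h; simp [tBound] at h; simp [tFN]
      exact ⟨tBound_spec n s h.1, tBound_spec n t h.2⟩
  | .cat s t => by
      intro h; simp [tBound] at h; simp [tFN]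
      exact ⟨tBound_spec n s h.1, tBound_spec n t h.2⟩
  | .kT e s t => by
      intro h; simp [tBound] at h; simp [tFN]
      exact ⟨⟨tBound_spec n e h.1, tBound_spec n s h.2.1⟩, tBound_spec n t h.2.2⟩
  | .app φ t => by
      intro h; simp [tBound] at h; simp [tFN]
      exact ⟨fBound_spec n φ h.1, tBound_spec n t h.2⟩
  | .bar φ t => by
      intro h; simp [tBound] at h; simp [tFN]
      exact ⟨fBound_spec n φ h.1, tBound_spec n t h.2⟩
theorem fBound_spec (n : ℕ) : ∀ φ : Func, fBound φ ≤ n → n ∉ fFN φ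
  | .fvar _ => by intro _; simp [fFN]
  | .lam y t => by
      intro h hmem
      simp [fFN] at hmem
      exact tBound_spec n t h hmem.1
end

/-! ### Formula-level lemmas. -/

theorem subN_var_self (x : ℕ) (A : Formula) : subN x (.var x) A = A := by
  induction A with
  | eq s t => simp [subN, tSubN_var_self]
  | falsum => rfl
  | and A B ihA ihB => simp [subN, ihA, ihB]
  | or A B ihA ihB => simp [subN, ihA, ihB]
  | imp A B ihA ihB => simp [subN, ihA, ihB]
  | allN m A ih => by_cases h : m = x <;> simp [subN, h, ih]
  | exN m A ih => by_cases h : m = x <;> simp [subN, h, ih]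
  | allF a A ih => simp [subN, ih]
  | exF a A ih => simp [subN, ih]

theorem FreeForN_var (x : ℕ) (A : Formula) : FreeForN (.var x) x A := by
  induction A with
  | eq s t => exact ⟨tFForN_var x s, tFForN_var x t⟩
  | falsum => trivial
  | and A B ihA ihB => exact ⟨ihA, ihB⟩
  | or A B ihA ihB => exact ⟨ihA, ihB⟩
  | imp A B ihA ihB => exact ⟨ihA, ihB⟩
  | allN m A ih =>
      by_cases h : m = x
      · exact Or.inl h
      · exact Or.inr (Or.inr ⟨by simp [tFN, h], ih⟩)
  | exN m A ih =>
      by_cases h : m = x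
      · exact Or.inl h
      · exact Or.inr (Or.inr ⟨by simp [tFN, h], ih⟩)
  | allF a A ih => exact Or.inr ⟨by simp [tFF], ih⟩
  | exF a A ih => exact Or.inr ⟨by simp [tFF], ih⟩

theorem subF_fvar_self (a : ℕ) (A : Formula) : subF a (.fvar a) A = A := by
  induction A with
  | eq s t => simp [subF, tSubF_fvar_self]
  | falsum => rfl
  | and A B ihA ihB => simp [subF, ihA, ihB]
  | or A B ihA ihB => simp [subF, ihA, ihB]
  | imp A B ihA ihB => simp [subF, ihA, ihB]
  | allN m A ih => simp [subF, ih]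
  | exN m A ih => simp [subF, ih]
  | allF b A ih => by_cases h : b = a <;> simp [subF, h, ih]
  | exF b A ih => by_cases h : b = a <;> simp [subF, h, ih]

theorem FreeForF_fvar (a : ℕ) (A : Formula) : FreeForF (.fvar a) a A := by
  induction A with
  | eq s t => exact ⟨tFForF_fvar a s, tFForF_fvar a t⟩
  | falsum => trivial
  | and A B ihA ihB => exact ⟨ihA, ihB⟩
  | or A B ihA ihB => exact ⟨ihA, ihB⟩
  | imp A B ihA ihB => exact ⟨ihA, ihB⟩
  | allN m A ih => exact Or.inr ⟨by simp [fFN], ih⟩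
  | exN m A ih => exact Or.inr ⟨by simp [fFN], ih⟩
  | allF b A ih =>
      by_cases h : b = a
      · exact Or.inl h
      · exact Or.inr (Or.inr ⟨by simp [fFF, h], ih⟩)
  | exF b A ih =>
      by_cases h : b = a
      · exact Or.inl h
      · exact Or.inr (Or.inr ⟨by simp [fFF, h], ih⟩)

/-! ### The negative translation commutes with substitution and preserves
free variables and substitutability. -/

theorem gTrans_subN (n : ℕ) (u : Term) (A : Formula) :
    gTrans (subN n u A) = subN n u (gTrans A) := by
  induction A with
  | eq s t => rfl
  | falsum => rfl
  | and A B ihA ihB => simp [subN, gTrans, ihA, ihB]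
  | or A B ihA ihB => simp [subN, gTrans, Formula.neg, ihA, ihB]
  | imp A B ihA ihB => simp [subN, gTrans, ihA, ihB]
  | allN m A ih => by_cases h : m = n <;> simp [subN, gTrans, h, ih]
  | exN m A ih => by_cases h : m = n <;> simp [subN, gTrans, Formula.neg, h, ih]
  | allF a A ih => simp [subN, gTrans, ih]
  | exF a A ih => simp [subN, gTrans, Formula.neg, ih]

theorem gTrans_subF (a : ℕ) (ψ : Func) (A : Formula) :
    gTrans (subF a ψ A) = subF a ψ (gTrans A) := by
  induction A with
  | eq s t => rfl
  | falsum => rfl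
  | and A B ihA ihB => simp [subF, gTrans, ihA, ihB]
  | or A B ihA ihB => simp [subF, gTrans, Formula.neg, ihA, ihB]
  | imp A B ihA ihB => simp [subF, gTrans, ihA, ihB]
  | allN m A ih => simp [subF, gTrans, ih]
  | exN m A ih => simp [subF, gTrans, Formula.neg, ih]
  | allF b A ih => by_cases h : b = a <;> simp [subF, gTrans, h, ih]
  | exF b A ih => by_cases h : b = a <;> simp [subF, gTrans, Formula.neg, h, ih]

theorem freeN_gTrans (A : Formula) : freeN (gTrans A) = freeN A := by
  induction A with
  | eq s t => rfl
  | falsum => rfl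
  | and A B ihA ihB => simp [freeN, gTrans, ihA, ihB]
  | or A B ihA ihB => simp [freeN, gTrans, Formula.neg, ihA, ihB]
  | imp A B ihA ihB => simp [freeN, gTrans, ihA, ihB]
  | allN m A ih => simp [freeN, gTrans, ih]
  | exN m A ih => simp [freeN, gTrans, Formula.neg, ih]
  | allF a A ih => simp [freeN, gTrans, ih]
  | exF a A ih => simp [freeN, gTrans, Formula.neg, ih]

theorem freeF_gTrans (A : Formula) : freeF (gTrans A) = freeF A := by
  induction A with
  | eq s t => rfl
  | falsum => rfl
  | and A B ihA ihB => simp [freeF, gTrans, ihA, ihB]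
  | or A B ihA ihB => simp [freeF, gTrans, Formula.neg, ihA, ihB]
  | imp A B ihA ihB => simp [freeF, gTrans, ihA, ihB]
  | allN m A ih => simp [freeF, gTrans, ih]
  | exN m A ih => simp [freeF, gTrans, Formula.neg, ih]
  | allF a A ih => simp [freeF, gTrans, ih]
  | exF a A ih => simp [freeF, gTrans, Formula.neg, ih]

theorem FreeForN_gTrans (u : Term) (n : ℕ) (A : Formula)
    (h : FreeForN u n A) : FreeForN u n (gTrans A) := by
  induction A with
  | eq s t => exact h
  | falsum => trivial
  | and A B ihA ihB => exact ⟨ihA h.1, ihB h.2⟩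
  | or A B ihA ihB => exact ⟨⟨⟨ihA h.1, trivial⟩, ⟨ihB h.2, trivial⟩⟩, trivial⟩
  | imp A B ihA ihB => exact ⟨ihA h.1, ihB h.2⟩
  | allN m A ih =>
      rcases h with h | h | ⟨h1, h2⟩
      · exact Or.inl h
      · exact Or.inr (Or.inl (by rwa [freeN_gTrans]))
      · exact Or.inr (Or.inr ⟨h1, ih h2⟩)
  | exN m A ih =>
      refine ⟨?_, trivial⟩
      rcases h with h | h | ⟨h1, h2⟩
      · exact Or.inl h
      · exact Or.inr (Or.inl (by simp [freeN, freeN_gTrans, Formula.neg]; exact h))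
      · exact Or.inr (Or.inr ⟨h1, ⟨ih h2, trivial⟩⟩)
  | allF b A ih =>
      rcases h with h | ⟨h1, h2⟩
      · exact Or.inl (by rwa [freeN_gTrans])
      · exact Or.inr ⟨h1, ih h2⟩
  | exF b A ih =>
      refine ⟨?_, trivial⟩
      rcases h with h | ⟨h1, h2⟩
      · exact Or.inl (by simp [freeN, freeN_gTrans, Formula.neg]; exact h)
      · exact Or.inr ⟨h1, ⟨ih h2, trivial⟩⟩

theorem FreeForF_gTrans (ψ : Func) (a : ℕ) (A : Formula)
    (h : FreeForF ψ a A) : FreeForF ψ a (gTrans A) := by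
  induction A with
  | eq s t => exact h
  | falsum => trivial
  | and A B ihA ihB => exact ⟨ihA h.1, ihB h.2⟩
  | or A B ihA ihB => exact ⟨⟨⟨ihA h.1, trivial⟩, ⟨ihB h.2, trivial⟩⟩, trivial⟩
  | imp A B ihA ihB => exact ⟨ihA h.1, ihB h.2⟩
  | allN m A ih =>
      rcases h with h | ⟨h1, h2⟩
      · exact Or.inl (by rwa [freeF_gTrans])
      · exact Or.inr ⟨h1, ih h2⟩
  | exN m A ih =>
      refine ⟨?_, trivial⟩
      rcases h with h | ⟨h1, h2⟩
      · exact Or.inl (by simp [freeF, freeF_gTrans, Formula.neg]; exact h)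
      · exact Or.inr ⟨h1, ⟨ih h2, trivial⟩⟩
  | allF b A ih =>
      rcases h with h | h | ⟨h1, h2⟩
      · exact Or.inl h
      · exact Or.inr (Or.inl (by rwa [freeF_gTrans]))
      · exact Or.inr (Or.inr ⟨h1, ih h2⟩)
  | exF b A ih =>
      refine ⟨?_, trivial⟩
      rcases h with h | h | ⟨h1, h2⟩
      · exact Or.inl h
      · exact Or.inr (Or.inl (by simp [freeF, freeF_gTrans, Formula.neg]; exact h))
      · exact Or.inr (Or.inr ⟨h1, ⟨ih h2, trivial⟩⟩)

/-! ### Equality reasoning inside IA₁. -/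

theorem axValid (s t : Term) (h : ∀ ρ σ, evalT ρ σ s = evalT ρ σ t) :
    Prov IA1 (.eq s t) :=
  Prov.ax (Or.inl (Or.inl (Or.inl (Or.inl ⟨s, t, rfl, h⟩))))

theorem axLeib (n : ℕ) (s t : Term) (A : Formula)
    (h1 : FreeForN s n A) (h2 : FreeForN t n A) :
    Prov IA1 ((Formula.eq s t).imp ((subN n s A).imp (subN n t A))) :=
  Prov.ax (Or.inl (Or.inl (Or.inl (Or.inr ⟨n, s, t, A, h1, h2, rfl⟩))))

theorem axSucNe (t : Term) : Prov IA1 (Formula.neg (.eq (.succ t) .zero)) :=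
  Prov.ax (Or.inl (Or.inl (Or.inr (Or.inr ⟨t, rfl⟩))))

theorem axInd (x : ℕ) (A : Formula) :
    Prov IA1 (((subN x Term.zero A).and
        (Formula.allN x (A.imp (subN x (Term.succ (Term.var x)) A)))).imp
      (Formula.allN x A)) :=
  Prov.ax (Or.inl (Or.inr ⟨x, A, rfl⟩))

theorem eqRefl (u : Term) : Prov IA1 (.eq u u) := axValid u u (fun _ _ => rfl)

theorem eqSymm (s t : Term) : Prov IA1 ((Formula.eq s t).imp (.eq t s)) := by
  have hs : tBound s ∉ tFN s := tBound_spec _ s le_rfl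
  set n := tBound s
  have L := axLeib n s t (Formula.eq (Term.var n) s)
    ⟨trivial, tFForN_notFree s n s hs⟩ ⟨trivial, tFForN_notFree t n s hs⟩
  have e1 : subN n s (Formula.eq (Term.var n) s) = .eq s s := by
    simp [subN, tSubN, tSubN_notFree n s s hs]
  have e2 : subN n t (Formula.eq (Term.var n) s) = .eq t s := by
    simp [subN, tSubN, tSubN_notFree n t s hs]
  rw [e1, e2] at L
  exact Prov.mp (pswap L) (eqRefl s)

theorem eqTrans (r s t : Term) :
    Prov IA1 ((Formula.eq r s).imp ((Formula.eq s t).imp (.eq r t))) := by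
  have hr : tBound r ∉ tFN r := tBound_spec _ r le_rfl
  set n := tBound r
  have L := axLeib n s t (Formula.eq r (Term.var n))
    ⟨tFForN_notFree s n r hr, trivial⟩ ⟨tFForN_notFree t n r hr, trivial⟩
  have e1 : subN n s (Formula.eq r (Term.var n)) = .eq r s := by
    simp [subN, tSubN, tSubN_notFree n s r hr]
  have e2 : subN n t (Formula.eq r (Term.var n)) = .eq r t := by
    simp [subN, tSubN, tSubN_notFree n t r hr]
  rw [e1, e2] at L
  exact pswap L

/-- Decidability of u = 0 in IA₁, by induction and the successor axiom. -/
theorem decEq0 (u : Term) :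
    Prov IA1 ((Formula.eq u .zero).or (Formula.neg (.eq u .zero))) := by
  set A : Formula := (Formula.eq (Term.var 0) .zero).or
    (Formula.neg (.eq (Term.var 0) .zero)) with hA
  have base : Prov IA1 (subN 0 Term.zero A) := by
    have : subN 0 Term.zero A =
        (Formula.eq Term.zero Term.zero).or (Formula.neg (.eq Term.zero Term.zero)) := by
      simp [hA, subN, tSubN, Formula.neg]
    rw [this]
    exact Prov.mp Prov.orI1 (eqRefl .zero)
  have step : Prov IA1 (Formula.allN 0 (A.imp (subN 0 (Term.succ (Term.var 0)) A))) := by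
    have : subN 0 (Term.succ (Term.var 0)) A =
        (Formula.eq (Term.succ (Term.var 0)) Term.zero).or
          (Formula.neg (.eq (Term.succ (Term.var 0)) Term.zero)) := by
      simp [hA, subN, tSubN, Formula.neg]
    rw [this]
    exact Prov.genN (Prov.mp Prov.k (Prov.mp Prov.orI2 (axSucNe (Term.var 0))))
  have all0 : Prov IA1 (Formula.allN 0 A) :=
    Prov.mp (axInd 0 A) (Prov.mp (Prov.mp Prov.andI base) step)
  have hff : FreeForN u 0 A := by
    simp [hA, FreeForN, tFForN, Formula.neg]
  have inst := Prov.mp (Prov.allNE (T := IA1) (u := u) hff) all0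
  have : subN 0 u A = (Formula.eq u .zero).or (Formula.neg (.eq u .zero)) := by
    simp [hA, subN, tSubN, Formula.neg]
  rwa [this] at inst

theorem eqToZero (s t : Term) :
    Prov IA1 ((Formula.eq s t).imp
      (.eq (Term.add (Term.sub s t) (Term.sub t s)) .zero)) := by
  have hs : max (tBound s) (tBound t) ∉ tFN s :=
    tBound_spec _ s (le_max_left _ _)
  have ht : max (tBound s) (tBound t) ∉ tFN t :=
    tBound_spec _ t (le_max_right _ _)
  set n := max (tBound s) (tBound t)
  set A : Formula := .eq (Term.add (Term.sub s (Term.var n))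
    (Term.sub (Term.var n) s)) .zero with hA
  have L := axLeib n s t A
    ⟨⟨⟨tFForN_notFree s n s hs, trivial⟩, trivial, tFForN_notFree s n s hs⟩, trivial⟩
    ⟨⟨⟨tFForN_notFree t n s hs, trivial⟩, trivial, tFForN_notFree t n s hs⟩, trivial⟩
  have e1 : subN n s A =
      .eq (Term.add (Term.sub s s) (Term.sub s s)) .zero := by
    simp [hA, subN, tSubN, tSubN_notFree n s s hs]
  have e2 : subN n t A =
      .eq (Term.add (Term.sub s t) (Term.sub t s)) .zero := by
    simp [hA, subN, tSubN, tSubN_notFree n t s hs]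
  rw [e1, e2] at L
  exact Prov.mp (pswap L) (axValid _ _ (by intro ρ σ; simp [evalT]))

theorem eqFromZero (s t : Term) :
    Prov IA1 ((Formula.eq (Term.add (Term.sub s t) (Term.sub t s)) .zero).imp
      (.eq s t)) := by
  have hs : max (tBound s) (tBound t) ∉ tFN s :=
    tBound_spec _ s (le_max_left _ _)
  have ht : max (tBound s) (tBound t) ∉ tFN t :=
    tBound_spec _ t (le_max_right _ _)
  set n := max (tBound s) (tBound t)
  set D : Term := Term.add (Term.sub s t) (Term.sub t s) with hD
  set Γ : List Formula := [Formula.eq D .zero] with hΓ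
  have hyp : Prov IA1 (ctxImp Γ (.eq D .zero)) := cHyp (by simp [hΓ])
  -- s ∸ t = 0
  have st0 : Prov IA1 (ctxImp Γ (.eq (Term.sub s t) .zero)) := by
    set A : Formula := .eq (Term.sub (Term.sub s t) (Term.var n)) .zero with hA
    have L := axLeib n D Term.zero A
      ⟨⟨⟨tFForN_notFree D n s hs, tFForN_notFree D n t ht⟩, trivial⟩, trivial⟩
      ⟨⟨⟨tFForN_notFree Term.zero n s hs, tFForN_notFree Term.zero n t ht⟩,
        trivial⟩, trivial⟩
    have e1 : subN n D A = .eq (Term.sub (Term.sub s t) D) .zero := by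
      simp [hA, subN, tSubN, tSubN_notFree n D s hs, tSubN_notFree n D t ht]
    have e2 : subN n Term.zero A =
        .eq (Term.sub (Term.sub s t) Term.zero) .zero := by
      simp [hA, subN, tSubN, tSubN_notFree n Term.zero s hs,
        tSubN_notFree n Term.zero t ht]
    rw [e1, e2] at L
    have v1 : Prov IA1 (.eq (Term.sub (Term.sub s t) D) .zero) :=
      axValid _ _ (by intro ρ σ; simp [hD, evalT])
    have a10 := cMP (cMP (cK L Γ) hyp) (cK v1 Γ)
    have v2 : Prov IA1 (.eq (Term.sub s t) (Term.sub (Term.sub s t) Term.zero)) :=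
      axValid _ _ (by intro ρ σ; simp [evalT])
    exact cMP (cMP (cK (eqTrans _ _ _) Γ) (cK v2 Γ)) a10
  -- t ∸ s = 0
  have ts0 : Prov IA1 (ctxImp Γ (.eq (Term.sub t s) .zero)) := by
    set A : Formula := .eq (Term.sub (Term.sub t s) (Term.var n)) .zero with hA
    have L := axLeib n D Term.zero A
      ⟨⟨⟨tFForN_notFree D n t ht, tFForN_notFree D n s hs⟩, trivial⟩, trivial⟩
      ⟨⟨⟨tFForN_notFree Term.zero n t ht, tFForN_notFree Term.zero n s hs⟩,
        trivial⟩, trivial⟩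
    have e1 : subN n D A = .eq (Term.sub (Term.sub t s) D) .zero := by
      simp [hA, subN, tSubN, tSubN_notFree n D s hs, tSubN_notFree n D t ht]
    have e2 : subN n Term.zero A =
        .eq (Term.sub (Term.sub t s) Term.zero) .zero := by
      simp [hA, subN, tSubN, tSubN_notFree n Term.zero s hs,
        tSubN_notFree n Term.zero t ht]
    rw [e1, e2] at L
    have v1 : Prov IA1 (.eq (Term.sub (Term.sub t s) D) .zero) :=
      axValid _ _ (by intro ρ σ; simp [hD, evalT])
    have a10 := cMP (cMP (cK L Γ) hyp) (cK v1 Γ)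
    have v2 : Prov IA1 (.eq (Term.sub t s) (Term.sub (Term.sub t s) Term.zero)) :=
      axValid _ _ (by intro ρ σ; simp [evalT])
    exact cMP (cMP (cK (eqTrans _ _ _) Γ) (cK v2 Γ)) a10
  -- s = s ∸ (s ∸ t)
  have e1 : Prov IA1 (ctxImp Γ (.eq s (Term.sub s (Term.sub s t)))) := by
    set A : Formula := .eq (Term.sub s (Term.var n))
      (Term.sub s (Term.sub s t)) with hA
    have L := axLeib n (Term.sub s t) Term.zero A
      ⟨⟨tFForN_notFree _ n s hs, trivial⟩,
        tFForN_notFree _ n s hs, tFForN_notFree _ n s hs, tFForN_notFree _ n t ht⟩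
      ⟨⟨tFForN_notFree _ n s hs, trivial⟩,
        tFForN_notFree _ n s hs, tFForN_notFree _ n s hs, tFForN_notFree _ n t ht⟩
    have c1 : subN n (Term.sub s t) A =
        .eq (Term.sub s (Term.sub s t)) (Term.sub s (Term.sub s t)) := by
      simp [hA, subN, tSubN, tSubN_notFree n (Term.sub s t) s hs,
        tSubN_notFree n (Term.sub s t) t ht]
    have c2 : subN n Term.zero A =
        .eq (Term.sub s Term.zero) (Term.sub s (Term.sub s t)) := by
      simp [hA, subN, tSubN, tSubN_notFree n Term.zero s hs,
        tSubN_notFree n Term.zero t ht]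
    rw [c1, c2] at L
    have a2 := cMP (cMP (cK L Γ) st0) (cK (eqRefl _) Γ)
    have v3 : Prov IA1 (.eq s (Term.sub s Term.zero)) :=
      axValid _ _ (by intro ρ σ; simp [evalT])
    exact cMP (cMP (cK (eqTrans _ _ _) Γ) (cK v3 Γ)) a2
  -- t = t ∸ (t ∸ s)
  have e2 : Prov IA1 (ctxImp Γ (.eq t (Term.sub t (Term.sub t s)))) := by
    set A : Formula := .eq (Term.sub t (Term.var n))
      (Term.sub t (Term.sub t s)) with hA
    have L := axLeib n (Term.sub t s) Term.zero A
      ⟨⟨tFForN_notFree _ n t ht, trivial⟩,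
        tFForN_notFree _ n t ht, tFForN_notFree _ n t ht, tFForN_notFree _ n s hs⟩
      ⟨⟨tFForN_notFree _ n t ht, trivial⟩,
        tFForN_notFree _ n t ht, tFForN_notFree _ n t ht, tFForN_notFree _ n s hs⟩
    have c1 : subN n (Term.sub t s) A =
        .eq (Term.sub t (Term.sub t s)) (Term.sub t (Term.sub t s)) := by
      simp [hA, subN, tSubN, tSubN_notFree n (Term.sub t s) s hs,
        tSubN_notFree n (Term.sub t s) t ht]
    have c2 : subN n Term.zero A =
        .eq (Term.sub t Term.zero) (Term.sub t (Term.sub t s)) := by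
      simp [hA, subN, tSubN, tSubN_notFree n Term.zero s hs,
        tSubN_notFree n Term.zero t ht]
    rw [c1, c2] at L
    have a2 := cMP (cMP (cK L Γ) ts0) (cK (eqRefl _) Γ)
    have v3 : Prov IA1 (.eq t (Term.sub t Term.zero)) :=
      axValid _ _ (by intro ρ σ; simp [evalT])
    exact cMP (cMP (cK (eqTrans _ _ _) Γ) (cK v3 Γ)) a2
  have vmin : Prov IA1 (.eq (Term.sub s (Term.sub s t))
      (Term.sub t (Term.sub t s))) :=
    axValid _ _ (by intro ρ σ; simp [evalT]; omega)
  have u1 := cMP (cMP (cK (eqTrans s (Term.sub s (Term.sub s t))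
    (Term.sub t (Term.sub t s))) Γ) e1) (cK vmin Γ)
  have e2s := cMP (cK (eqSymm t (Term.sub t (Term.sub t s))) Γ) e2
  exact cMP (cMP (cK (eqTrans s (Term.sub t (Term.sub t s)) t) Γ) u1) e2s

/-- Stability of equations in IA₁ : ¬¬ s = t → s = t. -/
theorem eqStab (s t : Term) :
    Prov IA1 ((Formula.nneg (.eq s t)).imp (.eq s t)) := by
  set D : Term := Term.add (Term.sub s t) (Term.sub t s) with hD
  set Γ : List Formula := [Formula.nneg (.eq s t)] with hΓ
  -- second branch : ¬ D = 0 → s = t (using ¬¬ s = t)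
  have b2 : Prov IA1 (ctxImp Γ ((Formula.neg (.eq D .zero)).imp (.eq s t))) := by
    apply cIntro
    set Γ2 : List Formula := Γ ++ [Formula.neg (.eq D .zero)] with hΓ2
    have nst : Prov IA1 (ctxImp (Γ2 ++ [Formula.eq s t]) .falsum) :=
      cMP (cHyp (by simp [hΓ2, hΓ, Formula.neg, Formula.nneg, hD]))
        (cMP (cK (eqToZero s t) _) (cHyp (by simp)))
    have nst' : Prov IA1 (ctxImp Γ2 (Formula.neg (.eq s t))) := cIntro nst
    have bot : Prov IA1 (ctxImp Γ2 .falsum) :=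
      cMP (cHyp (show Formula.nneg (.eq s t) ∈ Γ2 by simp [hΓ2, hΓ])) nst'
    exact cMP (cK Prov.exfalso Γ2) bot
  exact cMP (cMP (cMP (cK Prov.orE Γ) (cK (eqFromZero s t) Γ)) b2)
    (cK (decEq0 D) Γ)

/-! ### Stability of negative translations. -/

theorem gStab : ∀ A : Formula, Prov IA1 ((Formula.nneg (gTrans A)).imp (gTrans A))
  | .eq s t => eqStab s t
  | .falsum => by
      have : Prov IA1 (ctxImp [Formula.nneg .falsum] .falsum) :=
        cMP (cHyp (by simp [Formula.nneg, Formula.neg]))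
          (cK (pid (A := Formula.falsum)) _)
      exact this
  | .and A B => by
      simp only [gTrans]
      exact pairImp (ptrans (dcontrap Prov.andE1) (gStab A))
        (ptrans (dcontrap Prov.andE2) (gStab B))
  | .or A B => by simp only [gTrans]; exact negStab
  | .imp A B => by
      simp only [gTrans]
      set P := gTrans A
      set Q := gTrans B
      set Γ : List Formula := [Formula.nneg (P.imp Q), P] with hΓ
      have step1 : Prov IA1 (ctxImp ((Γ ++ [Formula.neg Q]) ++ [P.imp Q]) .falsum) :=
        cMP (X := Q) (Y := .falsum)
          (cHyp (A := Formula.neg Q) (by simp))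
          (cMP (X := P) (Y := Q) (cHyp (A := P.imp Q) (by simp))
            (cHyp (A := P) (by simp [hΓ])))
      have step2 : Prov IA1 (ctxImp (Γ ++ [Formula.neg Q])
          ((P.imp Q).imp .falsum)) := cIntro step1
      have step3 : Prov IA1 (ctxImp (Γ ++ [Formula.neg Q]) .falsum) :=
        cMP (X := (P.imp Q).imp .falsum) (Y := .falsum)
          (cHyp (A := Formula.nneg (P.imp Q)) (by simp [hΓ])) step2
      have step4 : Prov IA1 (ctxImp Γ ((Formula.neg Q).imp .falsum)) := cIntro step3
      have final : Prov IA1 (ctxImp Γ Q) := cMP (cK (gStab B) Γ) step4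
      exact final
  | .allN x A => by
      simp only [gTrans]
      have inst : Prov IA1 ((Formula.allN x (gTrans A)).imp (gTrans A)) := by
        have h := Prov.allNE (T := IA1) (n := x) (A := gTrans A)
          (u := Term.var x) (FreeForN_var x _)
        rwa [subN_var_self] at h
      exact Prov.allNI
        (by simp [freeN, Formula.nneg, Formula.neg]) (ptrans (dcontrap inst) (gStab A))
  | .exN x A => by simp only [gTrans]; exact negStab
  | .allF a A => by
      simp only [gTrans]
      have inst : Prov IA1 ((Formula.allF a (gTrans A)).imp (gTrans A)) := by
        have h := Prov.allFE (T := IA1) (a := a) (A := gTrans A)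
          (ψ := Func.fvar a) (FreeForF_fvar a _)
        rwa [subF_fvar_self] at h
      exact Prov.allFI
        (by simp [freeF, Formula.nneg, Formula.neg]) (ptrans (dcontrap inst) (gStab A))
  | .exF a A => by simp only [gTrans]; exact negStab

/-! ### The negative translation of every theorem of IA₁ + DNE is provable in IA₁. -/

theorem gProv {A : Formula} (h : Prov (IA1 ∪ DNE) A) : Prov IA1 (gTrans A) := by
  induction h with
  | ax h =>
      rcases h with h | h
      · rcases h with (((h | h) | h) | h) | h
        · obtain ⟨s, t, rfl, hv⟩ := h
          exact axValid s t hv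
        · obtain ⟨n, s, t, B, h1, h2, rfl⟩ := h
          simp only [gTrans, gTrans_subN]
          exact axLeib n s t (gTrans B) (FreeForN_gTrans _ _ _ h1)
            (FreeForN_gTrans _ _ _ h2)
        · rcases h with h | h
          · obtain ⟨s, t, rfl⟩ := h
            exact Prov.ax (Or.inl (Or.inl (Or.inr (Or.inl ⟨s, t, rfl⟩))))
          · obtain ⟨t, rfl⟩ := h
            exact axSucNe t
        · obtain ⟨x, B, rfl⟩ := h
          simp only [gTrans, gTrans_subN]
          exact axInd x (gTrans B)
        · obtain ⟨x, t, s, hf, rfl⟩ := h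
          exact Prov.ax (Or.inr ⟨x, t, s, hf, rfl⟩)
      · obtain ⟨B, rfl⟩ := h
        exact gStab B
  | k => exact Prov.k
  | s => exact Prov.s
  | andI => exact Prov.andI
  | andE1 => exact Prov.andE1
  | andE2 => exact Prov.andE2
  | orI1 => exact pswap Prov.andE1
  | orI2 => exact pswap Prov.andE2
  | @orE A B C =>
      simp only [gTrans]
      set gA := gTrans A
      set gB := gTrans B
      set gC := gTrans C
      set Γ : List Formula :=
        [gA.imp gC, gB.imp gC, Formula.neg ((Formula.neg gA).and (Formula.neg gB))]
        with hΓ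
      set Γ' : List Formula := Γ ++ [Formula.neg gC] with hΓ'
      have nA : Prov IA1 (ctxImp Γ' (Formula.neg gA)) := by
        apply cIntro (X := gA) (Y := Formula.falsum)
        exact cMP (X := gC) (Y := .falsum)
          (cHyp (A := Formula.neg gC) (by simp [hΓ', hΓ]))
          (cMP (X := gA) (Y := gC) (cHyp (A := gA.imp gC) (by simp [hΓ', hΓ]))
            (cHyp (A := gA) (by simp)))
      have nB : Prov IA1 (ctxImp Γ' (Formula.neg gB)) := by
        apply cIntro (X := gB) (Y := Formula.falsum)
        exact cMP (X := gC) (Y := .falsum)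
          (cHyp (A := Formula.neg gC) (by simp [hΓ', hΓ]))
          (cMP (X := gB) (Y := gC) (cHyp (A := gB.imp gC) (by simp [hΓ', hΓ]))
            (cHyp (A := gB) (by simp)))
      have pairAB := cMP (cMP (cK (Prov.andI (A := Formula.neg gA)
        (B := Formula.neg gB)) Γ') nA) nB
      have bot : Prov IA1 (ctxImp Γ' .falsum) :=
        cMP (X := (Formula.neg gA).and (Formula.neg gB)) (Y := .falsum)
          (cHyp (A := Formula.neg ((Formula.neg gA).and (Formula.neg gB)))
            (by simp [hΓ', hΓ])) pairAB
      have nn : Prov IA1 (ctxImp Γ ((gC.imp .falsum).imp .falsum)) := cIntro bot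
      have final : Prov IA1 (ctxImp Γ gC) := cMP (cK (gStab C) Γ) nn
      exact final
  | exfalso => exact Prov.exfalso
  | mp _ _ ih1 ih2 => exact Prov.mp ih1 ih2
  | @allNE n B u h =>
      have inst := Prov.allNE (T := IA1) (n := n) (A := gTrans B) (u := u)
        (FreeForN_gTrans u n B h)
      simp only [gTrans, gTrans_subN]
      exact inst
  | @allNI n B C h _ ih =>
      exact Prov.allNI (by rwa [freeN_gTrans]) ih
  | @exNI n B u h =>
      have inst := Prov.allNE (T := IA1) (n := n) (A := Formula.neg (gTrans B))
        (u := u) ⟨FreeForN_gTrans u n B h, trivial⟩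
      simp only [gTrans, gTrans_subN]
      exact pswap inst
  | @exNE n B C h _ ih =>
      have c : Prov IA1 ((Formula.neg (gTrans C)).imp (Formula.neg (gTrans B))) :=
        contrap ih
      have all := Prov.allNI (n := n) (A := Formula.neg (gTrans C))
        (by simp [freeN, Formula.neg, freeN_gTrans]; exact h) c
      exact ptrans (contrap all) (gStab C)
  | @allFE a B ψ h =>
      have inst := Prov.allFE (T := IA1) (a := a) (A := gTrans B) (ψ := ψ)
        (FreeForF_gTrans ψ a B h)
      simp only [gTrans, gTrans_subF]
      exact inst
  | @allFI a B C h _ ih =>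
      exact Prov.allFI (by rwa [freeF_gTrans]) ih
  | @exFI a B ψ h =>
      have inst := Prov.allFE (T := IA1) (a := a) (A := Formula.neg (gTrans B))
        (ψ := ψ) ⟨FreeForF_gTrans ψ a B h, trivial⟩
      simp only [gTrans, gTrans_subF]
      exact pswap inst
  | @exFE a B C h _ ih =>
      have c : Prov IA1 ((Formula.neg (gTrans C)).imp (Formula.neg (gTrans B))) :=
        contrap ih
      have all := Prov.allFI (a := a) (A := Formula.neg (gTrans C))
        (by simp [freeF, Formula.neg, freeF_gTrans]; exact h) c
      exact ptrans (contrap all) (gStab C)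
  | genN _ ih => exact Prov.genN ih
  | genF _ ih => exact Prov.genF ih

/-- Monotonicity of provability in the axiom set. -/
theorem provMono {T T' : Set Formula} (hs : T ⊆ T') {A : Formula}
    (h : Prov T A) : Prov T' A := by
  induction h with
  | ax h => exact Prov.ax (hs h)
  | k => exact Prov.k
  | s => exact Prov.s
  | andI => exact Prov.andI
  | andE1 => exact Prov.andE1
  | andE2 => exact Prov.andE2
  | orI1 => exact Prov.orI1
  | orI2 => exact Prov.orI2
  | orE => exact Prov.orE
  | exfalso => exact Prov.exfalso
  | mp _ _ ih1 ih2 => exact Prov.mp ih1 ih2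
  | allNE h => exact Prov.allNE h
  | allNI h _ ih => exact Prov.allNI h ih
  | exNI h => exact Prov.exNI h
  | exNE h _ ih => exact Prov.exNE h ih
  | allFE h => exact Prov.allFE h
  | allFI h _ ih => exact Prov.allFI h ih
  | exFI h => exact Prov.exFI h
  | exFE h _ ih => exact Prov.exFE h ih
  | genN _ ih => exact Prov.genN ih
  | genF _ ih => exact Prov.genF ih

/-- The minimum classical extension of IA₁ is IA₁ itself: the
Gödel–Gentzen negative translations of all axioms of IA₁ are provable in IA₁,
the negative translations of the rules of inference are admissible for IA₁
(so IA₁ proves the translation of every theorem of IA₁ + (¬¬A→A)), and hence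
(IA₁)^{+g} = IA₁. -/
theorem statement0 :
    (∀ A ∈ IA1, Prov IA1 (gTrans A)) ∧
    (∀ A : Formula, Prov (IA1 ∪ DNE) A → Prov IA1 (gTrans A)) ∧
    SameTheory (minClassExt IA1) IA1 := by
  refine ⟨fun A hA => gProv (Prov.ax (Or.inl hA)), fun A h => gProv h, ?_⟩
  intro A
  constructor
  · intro h
    induction h with
    | ax h =>
        rcases h with h | h
        · exact Prov.ax h
        · obtain ⟨B, hB, rfl⟩ := h
          exact gProv hB
    | k => exact Prov.k
    | s => exact Prov.s
    | andI => exact Prov.andI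
    | andE1 => exact Prov.andE1
    | andE2 => exact Prov.andE2
    | orI1 => exact Prov.orI1
    | orI2 => exact Prov.orI2
    | orE => exact Prov.orE
    | exfalso => exact Prov.exfalso
    | mp _ _ ih1 ih2 => exact Prov.mp ih1 ih2
    | allNE h => exact Prov.allNE h
    | allNI h _ ih => exact Prov.allNI h ih
    | exNI h => exact Prov.exNI h
    | exNE h _ ih => exact Prov.exNE h ih
    | allFE h => exact Prov.allFE h
    | allFI h _ ih => exact Prov.allFI h ih
    | exFI h => exact Prov.exFI h
    | exFE h _ ih => exact Prov.exFE h ih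
    | genN _ ih => exact Prov.genN ih
    | genF _ ih => exact Prov.genF ih
  · exact fun h => provMono Set.subset_union_left h

end NegInterp
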